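/- Let A_0, …, A_{m−1} be simple N×N real matrices, let W = { w ∈ ℝᴺ : ∑_{i=1}^N w_i = 0 }, and let U ⊆ W be a linear subspace with A_i U ⊆ U for all i. Then for every p ∈ [1, ∞), the L_p-spectral radius of the restrictions satisfies ρ_p(A_0|_U, …, A_{m−1}|_U) = ( ρ_1(A_0|_U, …, A_{m−1}|_U) )^{1/p}. -/

import Mathlib

open MeasureTheory Metric Filter Set Pointwise

open Topology

/-- A matrix is simple if every column contains exactly one entry `1` and all other entries `0`. -/
def IsSimple {I : Type*} (T : Matrix I I ℝ) : Prop :=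
  ∀ b, ∃ a, T a b = 1 ∧ ∀ a', a' ≠ a → T a' b = 0

/-- The subspace `W = { w : ∑ i, w i = 0 }`. -/
noncomputable def Wsub (I : Type*) [Fintype I] : Submodule ℝ (I → ℝ) :=
  LinearMap.ker ((∑ i : I, LinearMap.proj i) : (I → ℝ) →ₗ[ℝ] ℝ)

/-- The operator norm of the restriction of `T` to the subspace `U` (for `U` invariant under `T`
this is the norm of `T|_U`). -/
noncomputable def opNormOn {I : Type*} [Fintype I] (U : Submodule ℝ (I → ℝ))
    (T : Matrix I I ℝ) : ℝ :=
  sSup {c : ℝ | ∃ u ∈ U, ‖u‖ ≤ 1 ∧ c = ‖T.mulVec u‖}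

/-- The `L_p`-spectral radius of the family `A` of matrices restricted to the subspace `U`:
`ρ_p = lim_k ( m^{-k} ∑_{words w of length k} ‖(A_{w₁}⋯A_{w_k})|_U‖^p )^{1/(pk)}`. -/
noncomputable def lpRadiusOn {I ι : Type*} [Fintype I] [DecidableEq I] [Fintype ι]
    (U : Submodule ℝ (I → ℝ)) (A : ι → Matrix I I ℝ) (p : ℝ) : ℝ :=
  limUnder Filter.atTop fun k : ℕ =>
    (((Fintype.card ι : ℝ) ^ k)⁻¹ *
      ∑ w : Fin k → ι, opNormOn U ((List.ofFn fun i => A (w i)).prod) ^ p) ^ (1 / (p * k))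

set_option linter.unusedSectionVars false

section simple
variable {I : Type*} [Fintype I] [DecidableEq I]

lemma isSimple_one : IsSimple (1 : Matrix I I ℝ) := by
  intro b
  exact ⟨b, by simp, fun a' h => by simp [Matrix.one_apply, h]⟩

lemma IsSimple.mul {S T : Matrix I I ℝ} (hS : IsSimple S) (hT : IsSimple T) :
    IsSimple (S * T) := by
  intro b
  obtain ⟨j, hj1, hj0⟩ := hT b
  obtain ⟨a, ha1, ha0⟩ := hS j
  have key : ∀ a', (S * T) a' b = S a' j := by
    intro a'
    rw [Matrix.mul_apply]
    rw [Finset.sum_eq_single j]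
    · rw [hj1, mul_one]
    · intro j' _ hj'; rw [hj0 j' hj', mul_zero]
    · intro h; exact absurd (Finset.mem_univ j) h
  exact ⟨a, by rw [key, ha1], fun a' h => by rw [key, ha0 a' h]⟩

lemma isSimple_listProd {L : List (Matrix I I ℝ)} (h : ∀ M ∈ L, IsSimple M) :
    IsSimple L.prod := by
  induction L with
  | nil => simpa using isSimple_one
  | cons M L ih =>
    rw [List.prod_cons]
    exact (h M List.mem_cons_self).mul (ih fun M' hM' => h M' (List.mem_cons_of_mem _ hM'))

lemma finite_isSimple : {T : Matrix I I ℝ | IsSimple T}.Finite := by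
  have : {T : Matrix I I ℝ | IsSimple T} ⊆
      Set.range (fun σ : I → I => Matrix.of fun a b => if σ b = a then (1:ℝ) else 0) := by
    intro T hT
    choose σ h1 h0 using hT
    refine ⟨σ, ?_⟩
    ext a b
    simp only [Matrix.of_apply]
    by_cases h : σ b = a
    · subst h; simp [h1]
    · simp [h, h0 b a (fun e => h e.symm)]
  exact (Set.finite_range _).subset this
end simple

section opn
variable {I : Type*} [Fintype I] (U : Submodule ℝ (I → ℝ)) (T : Matrix I I ℝ)

lemma opNormOn_set_nonempty : {c : ℝ | ∃ u ∈ U, ‖u‖ ≤ 1 ∧ c = ‖T.mulVec u‖}.Nonempty :=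
  ⟨0, 0, U.zero_mem, by simp, by simp [Matrix.mulVec_zero]⟩

lemma opNormOn_bddAbove : BddAbove {c : ℝ | ∃ u ∈ U, ‖u‖ ≤ 1 ∧ c = ‖T.mulVec u‖} := by
  set f := LinearMap.toContinuousLinearMap (Matrix.mulVecLin T)
  refine ⟨‖f‖, ?_⟩
  rintro c ⟨u, -, hu1, rfl⟩
  have : T.mulVec u = f u := rfl
  rw [this]
  calc ‖f u‖ ≤ ‖f‖ * ‖u‖ := f.le_opNorm u
  _ ≤ ‖f‖ * 1 := mul_le_mul_of_nonneg_left hu1 (norm_nonneg f)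
  _ = ‖f‖ := mul_one _

lemma opNormOn_nonneg : 0 ≤ opNormOn U T :=
  le_csSup (opNormOn_bddAbove U T) ⟨0, U.zero_mem, by simp, by simp [Matrix.mulVec_zero]⟩

lemma norm_mulVec_le_of_le_one {u : I → ℝ} (hu : u ∈ U) (h1 : ‖u‖ ≤ 1) :
    ‖T.mulVec u‖ ≤ opNormOn U T :=
  le_csSup (opNormOn_bddAbove U T) ⟨u, hu, h1, rfl⟩

lemma norm_mulVec_le {u : I → ℝ} (hu : u ∈ U) :
    ‖T.mulVec u‖ ≤ opNormOn U T * ‖u‖ := by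
  rcases eq_or_ne u 0 with rfl | hne
  · simp [Matrix.mulVec_zero]
  · have hpos : (0:ℝ) < ‖u‖ := norm_pos_iff.2 hne
    have hv : ‖u‖⁻¹ • u ∈ U := U.smul_mem _ hu
    have hv1 : ‖‖u‖⁻¹ • u‖ ≤ 1 := by
      rw [norm_smul, norm_inv, norm_norm, inv_mul_cancel₀ hpos.ne']
    have := norm_mulVec_le_of_le_one U T hv hv1
    rw [Matrix.mulVec_smul, norm_smul, norm_inv, norm_norm] at this
    calc ‖T.mulVec u‖ = ‖u‖ * (‖u‖⁻¹ * ‖T.mulVec u‖) := by field_simp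
    _ ≤ ‖u‖ * opNormOn U T := mul_le_mul_of_nonneg_left this hpos.le
    _ = opNormOn U T * ‖u‖ := mul_comm _ _

lemma opNormOn_le {c : ℝ} (h : ∀ u ∈ U, ‖u‖ ≤ 1 → ‖T.mulVec u‖ ≤ c) :
    opNormOn U T ≤ c := by
  apply csSup_le (opNormOn_set_nonempty U T)
  rintro x ⟨u, hu, h1, rfl⟩
  exact h u hu h1

lemma opNormOn_mul_le {S T : Matrix I I ℝ} (hT : ∀ u ∈ U, T.mulVec u ∈ U) :
    opNormOn U (S * T) ≤ opNormOn U S * opNormOn U T := by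
  apply opNormOn_le
  intro u hu h1
  rw [← Matrix.mulVec_mulVec]
  calc ‖S.mulVec (T.mulVec u)‖ ≤ opNormOn U S * ‖T.mulVec u‖ :=
        norm_mulVec_le U S (hT u hu)
  _ ≤ opNormOn U S * (opNormOn U T * ‖u‖) :=
        mul_le_mul_of_nonneg_left (by simpa [mul_comm] using norm_mulVec_le U T hu)
          (opNormOn_nonneg U S)
  _ ≤ opNormOn U S * (opNormOn U T * 1) := by
        have := mul_le_mul_of_nonneg_left h1 (opNormOn_nonneg U T)
        exact mul_le_mul_of_nonneg_left this (opNormOn_nonneg U S)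
  _ = opNormOn U S * opNormOn U T := by ring
end opn

section words
variable {I ι : Type*} [Fintype I] [DecidableEq I] [Fintype ι]
  (U : Submodule ℝ (I → ℝ)) (A : ι → Matrix I I ℝ)

/-- The product of the matrices along a word. -/
def wordProd {k : ℕ} (w : Fin k → ι) : Matrix I I ℝ := (List.ofFn fun i => A (w i)).prod

/-- The sum of the `p`-th powers of the norms over all words of length `k`. -/
noncomputable def bsum (p : ℝ) (k : ℕ) : ℝ := ∑ w : Fin k → ι, opNormOn U (wordProd A w) ^ p

lemma isSimple_wordProd (hA : ∀ i, IsSimple (A i)) {k : ℕ} (w : Fin k → ι) :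
    IsSimple (wordProd A w) := by
  apply isSimple_listProd
  intro M hM
  rw [List.mem_ofFn] at hM
  obtain ⟨i, rfl⟩ := hM
  exact hA _

lemma wordProd_mem (hU : ∀ i, ∀ u ∈ U, (A i).mulVec u ∈ U) {k : ℕ} (w : Fin k → ι) :
    ∀ u ∈ U, (wordProd A w).mulVec u ∈ U := by
  unfold wordProd
  induction k with
  | zero => intro u hu; simpa [Matrix.mulVec_one] using hu
  | succ n ih =>
    intro u hu
    rw [List.ofFn_succ, List.prod_cons, ← Matrix.mulVec_mulVec]
    exact hU _ _ (ih (fun i => w i.succ) u hu)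

lemma wordProd_append {k l : ℕ} (w1 : Fin k → ι) (w2 : Fin l → ι) :
    wordProd A (fun i => Sum.elim w1 w2 (finSumFinEquiv.symm i)) =
      wordProd A w1 * wordProd A w2 := by
  unfold wordProd
  rw [List.ofFn_add, List.prod_append]
  have hc : ∀ i : Fin k, Fin.castLE (Nat.le_add_right k l) i = Fin.castAdd l i := fun _ => rfl
  simp only [hc, finSumFinEquiv_symm_apply_castAdd, finSumFinEquiv_symm_apply_natAdd,
    Sum.elim_inl, Sum.elim_inr]

lemma bsum_nonneg (p : ℝ) (k : ℕ) : 0 ≤ bsum U A p k :=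
  Finset.sum_nonneg fun _ _ => Real.rpow_nonneg (opNormOn_nonneg U _) p

lemma bsum_add_le (hU : ∀ i, ∀ u ∈ U, (A i).mulVec u ∈ U) {p : ℝ} (hp : 0 ≤ p) (k l : ℕ) :
    bsum U A p (k + l) ≤ bsum U A p k * bsum U A p l := by
  have he : ∀ q : (Fin k → ι) × (Fin l → ι),
      ((Equiv.sumArrowEquivProdArrow (Fin k) (Fin l) ι).symm.trans
        (Equiv.arrowCongr finSumFinEquiv (Equiv.refl ι))) q
        = fun i => Sum.elim q.1 q.2 (finSumFinEquiv.symm i) := fun q => rfl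
  have key : bsum U A p (k + l)
      = ∑ w1 : Fin k → ι, ∑ w2 : Fin l → ι,
          opNormOn U (wordProd A w1 * wordProd A w2) ^ p := by
    rw [bsum, ← Equiv.sum_comp ((Equiv.sumArrowEquivProdArrow (Fin k) (Fin l) ι).symm.trans
        (Equiv.arrowCongr finSumFinEquiv (Equiv.refl ι)))
        (fun w => opNormOn U (wordProd A w) ^ p), Fintype.sum_prod_type]
    refine Finset.sum_congr rfl fun w1 _ => Finset.sum_congr rfl fun w2 _ => ?_
    simp only [he]
    rw [wordProd_append]
  rw [key]
  calc ∑ w1 : Fin k → ι, ∑ w2 : Fin l → ι,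
          opNormOn U (wordProd A w1 * wordProd A w2) ^ p
      ≤ ∑ w1 : Fin k → ι, ∑ w2 : Fin l → ι,
          opNormOn U (wordProd A w1) ^ p * opNormOn U (wordProd A w2) ^ p := by
        refine Finset.sum_le_sum fun w1 _ => Finset.sum_le_sum fun w2 _ => ?_
        rw [← Real.mul_rpow (opNormOn_nonneg U _) (opNormOn_nonneg U _)]
        exact Real.rpow_le_rpow (opNormOn_nonneg U _)
          (opNormOn_mul_le U (wordProd_mem U A hU w2)) hp
  _ = bsum U A p k * bsum U A p l := (Finset.sum_mul_sum _ _ _ _).symm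

lemma lpRadiusOn_eq_limUnder (p : ℝ) :
    lpRadiusOn U A p = limUnder Filter.atTop fun k : ℕ =>
      (((Fintype.card ι : ℝ) ^ k)⁻¹ * bsum U A p k) ^ (1 / (p * k)) := rfl
end words

theorem lpRadiusOn_eq_rpow_of_simple {N m : ℕ} (A : Fin m → Matrix (Fin N) (Fin N) ℝ)
    (hA : ∀ i, IsSimple (A i)) (U : Submodule ℝ (Fin N → ℝ)) (hUW : U ≤ Wsub (Fin N))
    (hU : ∀ i, ∀ u ∈ U, (A i).mulVec u ∈ U) (p : ℝ) (hp : 1 ≤ p) :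
    lpRadiusOn U A p = lpRadiusOn U A 1 ^ (1 / p) := by
  have hp0 : 0 < p := lt_of_lt_of_le one_pos hp
  have hcard : ((Fintype.card (Fin m) : ℝ)) = (m : ℝ) := by simp
  by_cases hB : ∀ k, 0 < bsum U A 1 k
  swap
  -- Degenerate case: some (hence eventually all) sums vanish.
  · push_neg at hB
    obtain ⟨k0, hk0⟩ := hB
    have hz : bsum U A 1 k0 = 0 := le_antisymm hk0 (bsum_nonneg U A 1 k0)
    have hterm0 : ∀ w : Fin k0 → Fin m, opNormOn U (wordProd A w) = 0 := by
      have := (Finset.sum_eq_zero_iff_of_nonneg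
        (fun w _ => Real.rpow_nonneg (opNormOn_nonneg U (wordProd A w)) 1)).1 hz
      intro w
      have := this w (Finset.mem_univ w)
      rwa [Real.rpow_one] at this
    have hzq : ∀ q : ℝ, 0 < q → ∀ k, k0 ≤ k → bsum U A q k = 0 := by
      intro q hq k hk
      have hz0 : bsum U A q k0 = 0 :=
        Finset.sum_eq_zero fun w _ => by rw [hterm0 w, Real.zero_rpow hq.ne']
      refine le_antisymm ?_ (bsum_nonneg U A q k)
      have h := bsum_add_le U A hU hq.le k0 (k - k0)
      rw [Nat.add_sub_cancel' hk, hz0, zero_mul] at h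
      exact h
    have hlim : ∀ q : ℝ, 0 < q → lpRadiusOn U A q = 0 := by
      intro q hq
      rw [lpRadiusOn_eq_limUnder]
      apply Filter.Tendsto.limUnder_eq
      apply Filter.Tendsto.congr' _ (tendsto_const_nhds (x := (0:ℝ)))
      filter_upwards [eventually_ge_atTop (max k0 1)] with k hk
      have hk0' : k0 ≤ k := le_trans (le_max_left _ _) hk
      have hk1 : (1:ℕ) ≤ k := le_trans (le_max_right _ _) hk
      have hkpos : (0:ℝ) < k := by exact_mod_cast hk1
      have he : 1 / (q * k) ≠ 0 := one_div_ne_zero (by positivity)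
      rw [hzq q hq k hk0', mul_zero, Real.zero_rpow he]
    rw [hlim p hp0, hlim 1 one_pos, Real.zero_rpow (one_div_ne_zero hp0.ne')]
  -- Main case: all sums are positive.
  · -- m must be positive
    have hm : 0 < m := by
      rcases Nat.eq_zero_or_pos m with rfl | h
      · exfalso
        have : IsEmpty (Fin 1 → Fin 0) := ⟨fun f => (f 0).elim0⟩
        have : bsum U A 1 1 = 0 := by
          rw [bsum, Finset.univ_eq_empty, Finset.sum_empty]
        exact absurd this (hB 1).ne'
      · exact h
    have hmR : (0:ℝ) < ((Fintype.card (Fin m) : ℝ)) := by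
      rw [hcard]; exact_mod_cast hm
    -- every word has a positive-norm companion
    have hex : ∀ k, ∃ w : Fin k → Fin m, 0 < opNormOn U (wordProd A w) := by
      intro k
      by_contra h
      push_neg at h
      have : bsum U A 1 k = 0 := Finset.sum_eq_zero fun w _ => by
        rw [le_antisymm (h w) (opNormOn_nonneg U _), Real.zero_rpow one_ne_zero]
      exact absurd this (hB k).ne'
    -- finite set of possible norms
    have hVfin : (opNormOn U '' {T : Matrix (Fin N) (Fin N) ℝ | IsSimple T}).Finite :=
      Set.Finite.image _ finite_isSimple
    have hmemV : ∀ {k : ℕ} (w : Fin k → Fin m), opNormOn U (wordProd A w) ∈ hVfin.toFinset := by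
      intro k w
      rw [Set.Finite.mem_toFinset]
      exact ⟨_, isSimple_wordProd A hA w, rfl⟩
    have hVposne : (hVfin.toFinset.filter (fun x => 0 < x)).Nonempty := by
      obtain ⟨w, hw⟩ := hex 0
      exact ⟨_, Finset.mem_filter.2 ⟨hmemV w, hw⟩⟩
    have hVne : hVfin.toFinset.Nonempty := ⟨_, hmemV (fun i : Fin 0 => i.elim0)⟩
    set c := (hVfin.toFinset.filter (fun x => 0 < x)).min' hVposne with hc_def
    set C := hVfin.toFinset.max' hVne with hC_def
    have hc_pos : 0 < c := (Finset.mem_filter.1 (Finset.min'_mem _ hVposne)).2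
    have hcC : ∀ {k : ℕ} (w : Fin k → Fin m), opNormOn U (wordProd A w) = 0 ∨
        (c ≤ opNormOn U (wordProd A w) ∧ opNormOn U (wordProd A w) ≤ C) := by
      intro k w
      rcases eq_or_ne (opNormOn U (wordProd A w)) 0 with h0 | h0
      · exact Or.inl h0
      · refine Or.inr ⟨?_, Finset.le_max' _ _ (hmemV w)⟩
        have hpos : 0 < opNormOn U (wordProd A w) :=
          lt_of_le_of_ne (opNormOn_nonneg U _) (Ne.symm h0)
        exact Finset.min'_le _ _ (Finset.mem_filter.2 ⟨hmemV w, hpos⟩)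
    have hcC' : c ≤ C := by
      obtain ⟨w, hw⟩ := hex 0
      rcases hcC w with h | ⟨h1, h2⟩
      · exact absurd h hw.ne'
      · exact le_trans h1 h2
    have hC_pos : 0 < C := lt_of_lt_of_le hc_pos hcC'
    -- termwise comparison
    have hterm : ∀ {k : ℕ} (w : Fin k → Fin m),
        c ^ (p - 1) * opNormOn U (wordProd A w) ^ (1:ℝ) ≤ opNormOn U (wordProd A w) ^ p ∧
        opNormOn U (wordProd A w) ^ p ≤ C ^ (p - 1) * opNormOn U (wordProd A w) ^ (1:ℝ) := by
      intro k w
      rcases hcC w with h0 | ⟨h1, h2⟩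
      · rw [h0, Real.zero_rpow hp0.ne', Real.zero_rpow one_ne_zero, mul_zero, mul_zero]
        exact ⟨le_rfl, le_rfl⟩
      · have hxpos : 0 < opNormOn U (wordProd A w) := lt_of_lt_of_le hc_pos h1
        have hsplit : opNormOn U (wordProd A w) ^ p
            = opNormOn U (wordProd A w) ^ (p - 1) * opNormOn U (wordProd A w) ^ (1:ℝ) := by
          rw [← Real.rpow_add hxpos, sub_add_cancel]
        constructor
        · rw [hsplit]
          exact mul_le_mul_of_nonneg_right
            (Real.rpow_le_rpow hc_pos.le h1 (by linarith))
            (Real.rpow_nonneg hxpos.le 1)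
        · rw [hsplit]
          exact mul_le_mul_of_nonneg_right
            (Real.rpow_le_rpow hxpos.le h2 (by linarith))
            (Real.rpow_nonneg hxpos.le 1)
    have hcomp_lo : ∀ k, c ^ (p - 1) * bsum U A 1 k ≤ bsum U A p k := by
      intro k
      simp only [bsum, Finset.mul_sum]
      exact Finset.sum_le_sum fun w _ => (hterm w).1
    have hcomp_hi : ∀ k, bsum U A p k ≤ C ^ (p - 1) * bsum U A 1 k := by
      intro k
      simp only [bsum, Finset.mul_sum]
      exact Finset.sum_le_sum fun w _ => (hterm w).2
    have hBp : ∀ k, 0 < bsum U A p k := fun k =>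
      lt_of_lt_of_le (mul_pos (Real.rpow_pos_of_pos hc_pos _) (hB k)) (hcomp_lo k)
    -- lower bound on the sums: bsum ≥ c ^ q
    have hsum_lb : ∀ (q : ℝ), 0 < q → ∀ k, c ^ q ≤ bsum U A q k := by
      intro q hq k
      obtain ⟨w, hw⟩ := hex k
      rcases hcC w with h | ⟨h1, _⟩
      · exact absurd h hw.ne'
      calc c ^ q ≤ opNormOn U (wordProd A w) ^ q := Real.rpow_le_rpow hc_pos.le h1 hq.le
      _ ≤ bsum U A q k := Finset.single_le_sum
          (fun v _ => Real.rpow_nonneg (opNormOn_nonneg U _) q) (Finset.mem_univ w)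
    -- Fekete for q = 1
    have hsub : Subadditive (fun k => Real.log (bsum U A 1 k)) := by
      intro a b
      rw [← Real.log_mul (hB a).ne' (hB b).ne']
      exact Real.log_le_log (hB (a + b)) (bsum_add_le U A hU zero_le_one a b)
    have hbdd : BddBelow (Set.range fun n : ℕ => Real.log (bsum U A 1 n) / n) := by
      refine ⟨min 0 (Real.log c), ?_⟩
      rintro x ⟨n, rfl⟩
      rcases Nat.eq_zero_or_pos n with rfl | hn
      · simp
      · have hnR : (1:ℝ) ≤ n := by exact_mod_cast hn
        have hnpos : (0:ℝ) < n := by linarith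
        rw [le_div_iff₀ hnpos]
        have h1 : Real.log c ≤ Real.log (bsum U A 1 n) := by
          have := hsum_lb 1 one_pos n
          rw [Real.rpow_one] at this
          exact Real.log_le_log hc_pos this
        calc min 0 (Real.log c) * n ≤ min 0 (Real.log c) * 1 := by
              apply mul_le_mul_of_nonpos_left hnR (min_le_left _ _)
        _ = min 0 (Real.log c) := mul_one _
        _ ≤ Real.log c := min_le_right _ _
        _ ≤ Real.log (bsum U A 1 n) := h1
    set L := hsub.lim with hL_def
    have htend1 : Tendsto (fun n : ℕ => Real.log (bsum U A 1 n) / n) atTop (𝓝 L) :=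
      hsub.tendsto_lim hbdd
    -- squeeze for general p
    have htendp : Tendsto (fun n : ℕ => Real.log (bsum U A p n) / n) atTop (𝓝 L) := by
      have hlow : Tendsto (fun n : ℕ => Real.log (bsum U A 1 n) / n + (p - 1) * Real.log c / n)
          atTop (𝓝 (L + 0)) :=
        htend1.add (tendsto_const_div_atTop_nhds_zero_nat _)
      have hhigh : Tendsto (fun n : ℕ => Real.log (bsum U A 1 n) / n + (p - 1) * Real.log C / n)
          atTop (𝓝 (L + 0)) :=
        htend1.add (tendsto_const_div_atTop_nhds_zero_nat _)
      rw [add_zero] at hlow hhigh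
      refine tendsto_of_tendsto_of_tendsto_of_le_of_le' hlow hhigh ?_ ?_
      · filter_upwards [eventually_ge_atTop 1] with n hn
        have hnpos : (0:ℝ) < n := by exact_mod_cast hn
        rw [← add_div]
        rw [div_le_div_iff₀ hnpos hnpos]
        have h1 : Real.log (bsum U A 1 n) + (p - 1) * Real.log c ≤ Real.log (bsum U A p n) := by
          have := Real.log_le_log (mul_pos (Real.rpow_pos_of_pos hc_pos _) (hB n)) (hcomp_lo n)
          rwa [Real.log_mul (Real.rpow_pos_of_pos hc_pos _).ne' (hB n).ne',
            Real.log_rpow hc_pos, add_comm] at this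
        nlinarith
      · filter_upwards [eventually_ge_atTop 1] with n hn
        have hnpos : (0:ℝ) < n := by exact_mod_cast hn
        rw [← add_div]
        rw [div_le_div_iff₀ hnpos hnpos]
        have h1 : Real.log (bsum U A p n) ≤ Real.log (bsum U A 1 n) + (p - 1) * Real.log C := by
          have := Real.log_le_log (hBp n) (hcomp_hi n)
          rwa [Real.log_mul (Real.rpow_pos_of_pos hC_pos _).ne' (hB n).ne',
            Real.log_rpow hC_pos, add_comm] at this
        nlinarith
    -- the generic limit computation
    have main : ∀ q : ℝ, 0 < q → (∀ k, 0 < bsum U A q k) →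
        Tendsto (fun k : ℕ => Real.log (bsum U A q k) / k) atTop (𝓝 L) →
        lpRadiusOn U A q = Real.exp ((L - Real.log m) / q) := by
      intro q hq hpos htend
      rw [lpRadiusOn_eq_limUnder]
      apply Filter.Tendsto.limUnder_eq
      have h2 : Tendsto
          (fun k : ℕ => Real.exp ((Real.log (bsum U A q k) / k - Real.log m) / q))
          atTop (𝓝 (Real.exp ((L - Real.log m) / q))) :=
        (Real.continuous_exp.tendsto _).comp ((htend.sub tendsto_const_nhds).div_const q)
      apply h2.congr'
      filter_upwards [eventually_ge_atTop 1] with k hk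
      have hkpos : (0:ℝ) < k := by exact_mod_cast hk
      have hbase : 0 < ((Fintype.card (Fin m) : ℝ) ^ k)⁻¹ * bsum U A q k :=
        mul_pos (inv_pos.2 (pow_pos hmR k)) (hpos k)
      rw [Real.rpow_def_of_pos hbase]
      congr 1
      rw [Real.log_mul (inv_pos.2 (pow_pos hmR k)).ne' (hpos k).ne', Real.log_inv,
        Real.log_pow, hcard]
      field_simp
      ring
    rw [main p hp0 hBp htendp, main 1 one_pos hB (by simpa using htend1),
      Real.rpow_def_of_pos (Real.exp_pos _), Real.log_exp, div_one]
    rw [← Real.exp_log (x := Real.exp ((L - Real.log ↑m) / p)) (Real.exp_pos _), Real.log_exp]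
    congr 1
    ring
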